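/- Define h(n) = n·cos(2π/n) − (n−1)·cos(π/(n−1)) + 1 for real n. Then h(n) ≤ 0 for integer 2 ≤ n ≤ 6 and h(n) > 0 for all integers n ≥ 7. -/

import Mathlib

set_option maxHeartbeats 1000000

open Real

lemma h_big_aux (x : ℝ) (hx : 8 ≤ x) :
    x * Real.cos (2 * Real.pi / x) - (x - 1) * Real.cos (Real.pi / (x - 1)) + 1 > 0 := by
  have hπ1 : (3.14 : ℝ) < π := pi_gt_d2
  have hπ2 : π < 3.15 := pi_lt_d2
  have hx0 : (0:ℝ) < x := by linarith
  have hq0 : (0:ℝ) < x - 1 := by linarith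
  set t : ℝ := π / (2 * (x - 1)) with htdef
  have hqt : 2 * (x - 1) * t = π := by rw [htdef]; field_simp
  have ht0 : 0 < t := by positivity
  have ht1 : t ≤ 0.225 := by nlinarith
  have f1 : x ^ 2 - 2 * π ^ 2 ≤ x ^ 2 * Real.cos (2 * π / x) := by
    have h := Real.one_sub_sq_div_two_le_cos (x := 2 * π / x)
    have h2 := mul_le_mul_of_nonneg_left h (by positivity : (0:ℝ) ≤ x ^ 2)
    calc x ^ 2 - 2 * π ^ 2 = x ^ 2 * (1 - (2 * π / x) ^ 2 / 2) := by
          field_simp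
      _ ≤ x ^ 2 * Real.cos (2 * π / x) := h2
  have hd : Real.cos (π / (x - 1)) = 1 - 2 * Real.sin t ^ 2 := by
    have h := Real.sin_sq_eq_half_sub t
    have h2t : 2 * t = π / (x - 1) := by rw [eq_div_iff hq0.ne']; linear_combination hqt
    rw [h2t] at h
    linarith
  have hs : t - t ^ 3 / 4 < Real.sin t := by
    have := Real.sin_gt_sub_cube ht0
    nlinarith [pow_pos ht0 3]
  have hs0 : 0 ≤ t - t ^ 3 / 4 := by
    nlinarith [mul_nonneg ht0.le (show (0:ℝ) ≤ 4 - t ^ 2 by nlinarith)]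
  have hss : (t - t ^ 3 / 4) ^ 2 ≤ Real.sin t ^ 2 := by nlinarith
  have step1 : 2 * x * (x - 1) * (t - t ^ 3 / 4) ^ 2 ≤ 2 * x * (x - 1) * Real.sin t ^ 2 :=
    mul_le_mul_of_nonneg_left hss (by positivity)
  have e2 : π / 2 ≤ x * t := by nlinarith [hqt, ht0]
  have hA : (1.57 : ℝ) ≤ x * t := by linarith
  have hC : (0.97 : ℝ) ≤ (1 - t ^ 2 / 4) ^ 2 := by nlinarith
  have h5 : (3.14 * 0.97 : ℝ) ≤ π * (1 - t ^ 2 / 4) ^ 2 :=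
    mul_le_mul (by linarith) hC (by norm_num) (by linarith)
  have h6 : (1.57 * (3.14 * 0.97) : ℝ) ≤ (x * t) * (π * (1 - t ^ 2 / 4) ^ 2) :=
    mul_le_mul hA h5 (by norm_num) (by positivity)
  have e1' : (x * t) * (π * (1 - t ^ 2 / 4) ^ 2) = 2 * x * (x - 1) * (t - t ^ 3 / 4) ^ 2 := by
    linear_combination (-(x * t * (1 - t ^ 2 / 4) ^ 2)) * hqt
  have big : (4.78 : ℝ) ≤ 2 * x * (x - 1) * Real.sin t ^ 2 := by
    linarith [step1, h6, e1']
  have hπsq : π ^ 2 < 9.9225 := by nlinarith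
  have key : 0 < x * (x * Real.cos (2 * π / x) - (x - 1) * Real.cos (π / (x - 1)) + 1) := by
    rw [hd]
    have expand : x * (x * Real.cos (2 * π / x) - (x - 1) * (1 - 2 * Real.sin t ^ 2) + 1)
        = x ^ 2 * Real.cos (2 * π / x) - (x ^ 2 - x) + 2 * x * (x - 1) * Real.sin t ^ 2 + x := by
      ring
    rw [expand]
    linarith [f1, big, hπsq]
  nlinarith [key, hx0]

lemma h_seven_aux :
    (7:ℝ) * Real.cos (2 * Real.pi / 7) - ((7:ℝ) - 1) * Real.cos (Real.pi / ((7:ℝ) - 1)) + 1 > 0 := by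
  have hπ1 : (3.14 : ℝ) < π := pi_gt_d2
  have hπ2 : π < 3.15 := pi_lt_d2
  have h6 : ((7:ℝ) - 1) = 6 := by norm_num
  rw [h6, Real.cos_pi_div_six]
  set t : ℝ := π / 7 with htdef
  have ht0 : 0 < t := by positivity
  have htl : 0.4485 ≤ t := by rw [htdef]; nlinarith
  have htu : t ≤ 0.45 := by rw [htdef]; nlinarith
  have habs : |t| ≤ 1 := by rw [abs_of_pos ht0]; linarith
  have hb := Real.sin_bound habs
  rw [abs_of_pos ht0] at hb
  have hsu : Real.sin t ≤ t - t ^ 3 / 6 + t ^ 4 * (5 / 96) := by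
    have := abs_le.mp hb
    linarith [this.2, mul_nonneg (pow_pos ht0 4).le (show (0:ℝ) ≤ 5 / 96 - t / 100 by linarith)]
  have hsn : 0 ≤ Real.sin t := Real.sin_nonneg_of_nonneg_of_le_pi ht0.le (by nlinarith)
  have ht3 : (0.4485:ℝ) ^ 3 ≤ t ^ 3 := pow_le_pow_left₀ (by norm_num) htl 3
  have ht4 : t ^ 4 ≤ (0.45:ℝ) ^ 4 := pow_le_pow_left₀ ht0.le htu 4
  have hu : t - t ^ 3 / 6 + t ^ 4 * (5 / 96) ≤ 0.4371 := by nlinarith [ht3, ht4]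
  have hs2 : Real.sin t ^ 2 ≤ 0.4371 ^ 2 := by nlinarith
  have hc : Real.cos (2 * π / 7) = 1 - 2 * Real.sin t ^ 2 := by
    have h := Real.sin_sq_eq_half_sub t
    have h2t : 2 * t = 2 * π / 7 := by rw [htdef]; ring
    rw [h2t] at h
    linarith
  rw [hc]
  have hr : Real.sqrt 3 ≤ 1.7320509 := by
    nlinarith [Real.sq_sqrt (show (0:ℝ) ≤ 3 by norm_num), Real.sqrt_nonneg 3]
  nlinarith [hs2, hr]

theorem h_sign (n : ℤ) :
    (2 ≤ n → n ≤ 6 →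
      (n : ℝ) * Real.cos (2 * Real.pi / (n : ℝ)) - ((n : ℝ) - 1) * Real.cos (Real.pi / ((n : ℝ) - 1)) + 1 ≤ 0) ∧
    (7 ≤ n →
      (n : ℝ) * Real.cos (2 * Real.pi / (n : ℝ)) - ((n : ℝ) - 1) * Real.cos (Real.pi / ((n : ℝ) - 1)) + 1 > 0) := by
  constructor
  · intro h2 h6
    interval_cases n
    · push_cast
      norm_num [show (2:ℝ) * π / 2 = π by ring, Real.cos_pi]
    · push_cast
      rw [show (2:ℝ) * π / 3 = π - π / 3 by ring, show (3:ℝ) - 1 = 2 by norm_num,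
        Real.cos_pi_sub, Real.cos_pi_div_three, Real.cos_pi_div_two]
      norm_num
    · push_cast
      rw [show (2:ℝ) * π / 4 = π / 2 by ring, show (4:ℝ) - 1 = 3 by norm_num,
        Real.cos_pi_div_two, Real.cos_pi_div_three]
      norm_num
    · push_cast
      rw [show (2:ℝ) * π / 5 = 2 * (π / 5) by ring, show (5:ℝ) - 1 = 4 by norm_num,
        Real.cos_two_mul, Real.cos_pi_div_five, Real.cos_pi_div_four]
      nlinarith [Real.sq_sqrt (show (0:ℝ) ≤ 5 by norm_num), Real.sqrt_nonneg 5,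
        Real.sq_sqrt (show (0:ℝ) ≤ 2 by norm_num), Real.sqrt_nonneg 2]
    · push_cast
      rw [show (2:ℝ) * π / 6 = π / 3 by ring, show (6:ℝ) - 1 = 5 by norm_num,
        Real.cos_pi_div_three, Real.cos_pi_div_five]
      nlinarith [Real.sq_sqrt (show (0:ℝ) ≤ 5 by norm_num), Real.sqrt_nonneg 5]
  · intro h7
    rcases eq_or_lt_of_le h7 with h | h8
    · rw [← h]
      push_cast
      exact h_seven_aux
    · have h8' : (8:ℝ) ≤ (n:ℝ) := by exact_mod_cast h8
      exact h_big_aux (n:ℝ) h8'
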